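/- There exist constants 0 < c ≤ C < ∞ (depending on Λ) and an integer b₀ such that for all b ≥ b₀: c R_b ≤ λ_b ≤ C R_b, where R_b := b² Λ([0,1/b]) + ∫_{[1/b,1]} x^{-2} dΛ(x) − b ∫_{[1/b, log(2(b−1)/(1−e^{−1}))/b)} x^{-1} (1−x)^{b−1} dΛ(x). -/

import Mathlib

open MeasureTheory Finset Filter

/-- `lamBK μ b k` is `λ_{b,k} = ∫_{[0,1]} x^{k-2} (1-x)^{b-k} dΛ(x)`. -/
noncomputable def lamBK (μ : Measure ℝ) (b k : ℕ) : ℝ :=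
  ∫ x in Set.Icc (0:ℝ) 1, x ^ (k - 2) * (1 - x) ^ (b - k) ∂μ

/-- `lamB μ b` is `λ_b = Σ_{k=2}^b C(b,k) λ_{b,k}`. -/
noncomputable def lamB (μ : Measure ℝ) (b : ℕ) : ℝ :=
  ∑ k ∈ Finset.Icc 2 b, (b.choose k : ℝ) * lamBK μ b k

/-- `gamB μ b` is `γ_b = Σ_{k=2}^b C(b,k) (k-1) λ_{b,k}`. -/
noncomputable def gamB (μ : Measure ℝ) (b : ℕ) : ℝ :=
  ∑ k ∈ Finset.Icc 2 b, (b.choose k : ℝ) * ((k : ℝ) - 1) * lamBK μ b k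
/-- The comparison quantity `R_b` in Lemma 3 (i). -/
noncomputable def Rquant (μ : Measure ℝ) (b : ℕ) : ℝ :=
  (b : ℝ) ^ 2 * (μ (Set.Icc (0:ℝ) (1 / b))).toReal
    + (∫ x in Set.Icc (1 / (b:ℝ)) 1, 1 / x ^ 2 ∂μ)
    - (b : ℝ) * ∫ x in
        Set.Ico (1 / (b:ℝ)) (Real.log (2 * ((b:ℝ) - 1) / (1 - Real.exp (-1))) / b),
        (1 - x) ^ (b - 1) / x ∂μ


noncomputable def Gfun (b : ℕ) (x : ℝ) : ℝ :=
  ∑ k ∈ Finset.Icc 2 b, (b.choose k : ℝ) * (x ^ (k - 2) * (1 - x) ^ (b - k))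

lemma sq_mul_G (b : ℕ) (hb : 2 ≤ b) (x : ℝ) :
    x ^ 2 * Gfun b x = 1 - (1 - x) ^ b - b * x * (1 - x) ^ (b - 1) := by
  have hpow := add_pow x (1 - x) b
  rw [show x + (1 - x) = 1 by ring, one_pow] at hpow
  have hsplit : ∑ k ∈ Finset.range (b + 1), x ^ k * (1 - x) ^ (b - k) * (b.choose k : ℝ)
      = (∑ k ∈ Finset.Ico 0 2, x ^ k * (1 - x) ^ (b - k) * (b.choose k : ℝ))
        + ∑ k ∈ Finset.Ico 2 (b + 1), x ^ k * (1 - x) ^ (b - k) * (b.choose k : ℝ) := by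
    rw [Finset.sum_Ico_consecutive _ (Nat.zero_le 2) (by omega), Finset.range_eq_Ico]
  have h01 : ∑ k ∈ Finset.Ico 0 2, x ^ k * (1 - x) ^ (b - k) * (b.choose k : ℝ)
      = (1 - x) ^ b + x * (1 - x) ^ (b - 1) * b := by
    rw [Finset.sum_Ico_eq_sum_range]
    rw [Finset.sum_range_succ, Finset.sum_range_one]
    simp [Nat.choose_one_right]
  have hIcc : Finset.Ico 2 (b + 1) = Finset.Icc 2 b := Finset.Ico_add_one_right_eq_Icc 2 b
  have hterm : ∀ k ∈ Finset.Icc 2 b,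
      x ^ k * (1 - x) ^ (b - k) * (b.choose k : ℝ)
        = x ^ 2 * ((b.choose k : ℝ) * (x ^ (k - 2) * (1 - x) ^ (b - k))) := by
    intro k hk
    simp only [Finset.mem_Icc] at hk
    rw [show x ^ k = x ^ 2 * x ^ (k - 2) by rw [← pow_add]; congr 1; omega]
    ring
  rw [hsplit, h01, hIcc, Finset.sum_congr rfl hterm, ← Finset.mul_sum] at hpow
  rw [Gfun]
  linarith [hpow]

lemma Gfun_nonneg (b : ℕ) {x : ℝ} (h0 : 0 ≤ x) (h1 : x ≤ 1) : 0 ≤ Gfun b x := by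
  apply Finset.sum_nonneg
  intro k hk
  have : (0:ℝ) ≤ 1 - x := by linarith
  positivity

lemma B_le_quad (b : ℕ) {x : ℝ} (h0 : 0 ≤ x) (h1 : x ≤ 1) :
    1 - (1 - x) ^ b - b * x * (1 - x) ^ (b - 1) ≤ b * (b - 1) / 2 * x ^ 2 := by
  have hy0 : (0:ℝ) ≤ 1 - x := by linarith
  have hy1 : (1:ℝ) - x ≤ 1 := by linarith
  have hgeom : 1 - (1 - x) ^ b = x * ∑ j ∈ Finset.range b, (1 - x) ^ j := by
    have := geom_sum_mul (1 - x) b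
    have h2 : (1 - x) - 1 = -x := by ring
    rw [h2] at this
    linarith [this]
  have hkey : ∀ j ∈ Finset.range b,
      (1 - x) ^ j - (1 - x) ^ (b - 1) ≤ ((b:ℝ) - 1 - j) * x := by
    intro j hj
    simp only [Finset.mem_range] at hj
    have hsplit : (1 - x) ^ (b - 1) = (1 - x) ^ j * (1 - x) ^ (b - 1 - j) := by
      rw [← pow_add]; congr 1; omega
    have hbern : 1 - ((b:ℝ) - 1 - j) * x ≤ (1 - x) ^ (b - 1 - j) := by
      have := one_add_mul_le_pow (a := -x) (by linarith) (b - 1 - j)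
      have hc : ((b - 1 - j : ℕ) : ℝ) = (b:ℝ) - 1 - j := by
        push_cast [Nat.cast_sub (by omega : j ≤ b - 1), Nat.cast_sub (by omega : 1 ≤ b)]; ring
      rw [hc] at this
      calc 1 - ((b:ℝ) - 1 - j) * x = 1 + ((b:ℝ) - 1 - j) * (-x) := by ring
        _ ≤ (1 + -x) ^ (b - 1 - j) := this
        _ = (1 - x) ^ (b - 1 - j) := by ring_nf
    have hpj : (1 - x) ^ j ≤ 1 := pow_le_one₀ hy0 hy1
    have hpos : 0 ≤ 1 - (1 - x) ^ (b - 1 - j) := by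
      nlinarith [pow_le_one₀ hy0 hy1 (n := b - 1 - j)]
    calc (1 - x) ^ j - (1 - x) ^ (b - 1)
        = (1 - x) ^ j * (1 - (1 - x) ^ (b - 1 - j)) := by rw [hsplit]; ring
      _ ≤ 1 * (1 - (1 - x) ^ (b - 1 - j)) := by
          apply mul_le_mul_of_nonneg_right hpj hpos
      _ = 1 - (1 - x) ^ (b - 1 - j) := by ring
      _ ≤ ((b:ℝ) - 1 - j) * x := by linarith
  have hsum : ∑ j ∈ Finset.range b, ((1 - x) ^ j - (1 - x) ^ (b - 1))
      ≤ ∑ j ∈ Finset.range b, ((b:ℝ) - 1 - j) * x := Finset.sum_le_sum hkey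
  have hid : ∑ j ∈ Finset.range b, ((b:ℝ) - 1 - j) * x = (b * (b - 1) / 2) * x := by
    rw [← Finset.sum_mul]
    congr 1
    have hnat : ∑ j ∈ Finset.range b, (j:ℝ) = b * (b - 1) / 2 := by
      have := Finset.sum_range_id_mul_two b
      have : ((∑ j ∈ Finset.range b, j : ℕ) : ℝ) * 2 = (b:ℝ) * ((b:ℝ) - 1) := by
        rw [← Nat.cast_ofNat, ← Nat.cast_mul, this]
        rcases Nat.eq_zero_or_pos b with h | h
        · simp [h]
        · push_cast [Nat.cast_sub h]; ring
      push_cast at this ⊢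
      linarith
    rw [Finset.sum_sub_distrib, Finset.sum_sub_distrib, hnat]
    simp
    ring
  have hmain : 1 - (1 - x) ^ b - b * x * (1 - x) ^ (b - 1)
      = x * ∑ j ∈ Finset.range b, ((1 - x) ^ j - (1 - x) ^ (b - 1)) := by
    rw [Finset.sum_sub_distrib, Finset.sum_const, Finset.card_range]
    rw [mul_sub, ← hgeom]
    simp
    ring
  rw [hmain]
  have h2 := hsum.trans (le_of_eq hid)
  nlinarith [mul_le_mul_of_nonneg_left h2 h0]

lemma one_sub_pow_le_exp {x : ℝ} (h1 : x ≤ 1) (n : ℕ) :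
    (1 - x) ^ n ≤ Real.exp (-(n * x)) := by
  have hb : 1 - x ≤ Real.exp (-x) := by
    have := Real.add_one_le_exp (-x)
    linarith
  calc (1 - x) ^ n ≤ Real.exp (-x) ^ n := by
        apply pow_le_pow_left₀ (by linarith) hb
    _ = Real.exp (-(n * x)) := by
        rw [← Real.exp_nat_mul]; ring_nf

lemma self_mul_exp_neg_le {t : ℝ} : t * Real.exp (-t) ≤ Real.exp (-1) := by
  have h := Real.add_one_le_exp (t - 1)
  have h2 : t ≤ Real.exp t * Real.exp (-1) := by
    rw [← Real.exp_add]
    calc t = (t - 1) + 1 := by ring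
      _ ≤ Real.exp (t - 1) := h
      _ = Real.exp (t + -1) := by ring_nf
  calc t * Real.exp (-t) ≤ (Real.exp t * Real.exp (-1)) * Real.exp (-t) := by
        apply mul_le_mul_of_nonneg_right h2 (Real.exp_nonneg _)
    _ = Real.exp (-1) := by
        rw [mul_comm, ← mul_assoc, ← Real.exp_add]
        simp
lemma exp_neg_one_lt : Real.exp (-1) < 0.368 := by
  rw [Real.exp_neg]
  rw [inv_lt_comm₀ (Real.exp_pos 1) (by norm_num)]
  calc (0.368:ℝ)⁻¹ < 2.7182818283 := by norm_num
    _ < Real.exp 1 := Real.exp_one_gt_d9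

lemma B_lower (b : ℕ) (hb : 100 ≤ b) {x : ℝ} (hx : 1 / b ≤ x) (h1 : x ≤ 1) :
    1 / 4 ≤ 1 - (1 - x) ^ b - b * x * (1 - x) ^ (b - 1) := by
  have hbpos : (0:ℝ) < b := by positivity
  have hx0 : 0 < x := lt_of_lt_of_le (by positivity) hx
  have hbx : 1 ≤ b * x := by
    rw [div_le_iff₀ hbpos] at hx; linarith [hx]
  have hv : (1 - x) ^ b ≤ Real.exp (-1) := by
    calc (1 - x) ^ b ≤ Real.exp (-(b * x)) := one_sub_pow_le_exp h1 b
      _ ≤ Real.exp (-1) := by apply Real.exp_le_exp.2; linarith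
  have hsu : b * x * (1 - x) ^ (b - 1) ≤ (100 / 99) * Real.exp (-1) := by
    have hb1 : ((b - 1 : ℕ) : ℝ) = (b:ℝ) - 1 := by
      push_cast [Nat.cast_sub (by omega : 1 ≤ b)]; ring
    have h1' : (1 - x) ^ (b - 1) ≤ Real.exp (-(((b:ℝ) - 1) * x)) := by
      have := one_sub_pow_le_exp h1 (b - 1)
      rwa [hb1] at this
    set t := ((b:ℝ) - 1) * x with ht
    have hbb1 : (b:ℝ) ≤ (100 / 99) * ((b:ℝ) - 1) := by
      have : (100:ℝ) ≤ b := by exact_mod_cast hb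
      nlinarith
    have ht0 : 0 ≤ t := by
      have hb1r : (1:ℝ) ≤ (b:ℝ) := by exact_mod_cast (by omega : 1 ≤ b)
      have : 0 ≤ (b:ℝ) - 1 := by linarith
      positivity
    calc b * x * (1 - x) ^ (b - 1)
        ≤ b * x * Real.exp (-t) := by
          apply mul_le_mul_of_nonneg_left h1' (by positivity)
      _ ≤ ((100 / 99) * t) * Real.exp (-t) := by
          apply mul_le_mul_of_nonneg_right _ (Real.exp_nonneg _)
          rw [ht]; nlinarith
      _ = (100 / 99) * (t * Real.exp (-t)) := by ring
      _ ≤ (100 / 99) * Real.exp (-1) := by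
          apply mul_le_mul_of_nonneg_left self_mul_exp_neg_le (by norm_num)
  have he := exp_neg_one_lt
  have he0 := Real.exp_nonneg (-1)
  nlinarith

lemma Gfun_lower_small (b : ℕ) (hb : 100 ≤ b) {x : ℝ} (h0 : 0 ≤ x) (hx : x ≤ 1 / b) :
    (b:ℝ) ^ 2 / 16 ≤ Gfun b x := by
  have hbpos : (0:ℝ) < b := by positivity
  have hbr : (100:ℝ) ≤ b := by exact_mod_cast hb
  have hx1 : x ≤ 1 := hx.trans (by rw [div_le_one hbpos]; linarith)
  have hterm : (b.choose 2 : ℝ) * (x ^ (2 - 2) * (1 - x) ^ (b - 2)) ≤ Gfun b x := by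
    apply Finset.single_le_sum (f := fun k => (b.choose k : ℝ) * (x ^ (k - 2) * (1 - x) ^ (b - k)))
    · intro k hk
      have : (0:ℝ) ≤ 1 - x := by linarith
      positivity
    · simp only [Finset.mem_Icc]; omega
  have hch : (b.choose 2 : ℝ) = b * ((b:ℝ) - 1) / 2 := Nat.cast_choose_two (K := ℝ) b
  have hch4 : (b:ℝ) ^ 2 / 4 ≤ (b.choose 2 : ℝ) := by rw [hch]; nlinarith
  have hp : (1:ℝ) / 4 ≤ (1 - x) ^ (b - 2) := by
    have hexp : Real.exp (-(1 / ((b:ℝ) - 1))) ≤ 1 - 1 / b := by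
      have h := Real.add_one_le_exp (1 / ((b:ℝ) - 1))
      have hb1 : (0:ℝ) < (b:ℝ) - 1 := by linarith
      rw [Real.exp_neg]
      rw [inv_le_comm₀ (Real.exp_pos _) (by
        rw [sub_pos, div_lt_one hbpos]; linarith)]
      have : (1 - 1 / (b:ℝ))⁻¹ = 1 + 1 / ((b:ℝ) - 1) := by
        field_simp
        ring
      rw [this]
      linarith
    have hmono : (1 - 1 / (b:ℝ)) ^ (b - 2) ≤ (1 - x) ^ (b - 2) := by
      apply pow_le_pow_left₀ (by
        have : 1 / (b:ℝ) ≤ 1 := by rw [div_le_one hbpos]; linarith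
        linarith) (by linarith)
    have hstep : Real.exp (-(1 / ((b:ℝ) - 1))) ^ (b - 2) ≤ (1 - 1 / (b:ℝ)) ^ (b - 2) := by
      apply pow_le_pow_left₀ (Real.exp_nonneg _) hexp
    have hval : Real.exp (-(1 / ((b:ℝ) - 1))) ^ (b - 2)
        = Real.exp (-(((b:ℝ) - 2) / ((b:ℝ) - 1))) := by
      rw [← Real.exp_nat_mul]
      congr 1
      have : ((b - 2 : ℕ) : ℝ) = (b:ℝ) - 2 := by
        push_cast [Nat.cast_sub (by omega : 2 ≤ b)]; ring
      rw [this]; ring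
    have hge : Real.exp (-1) ≤ Real.exp (-(((b:ℝ) - 2) / ((b:ℝ) - 1))) := by
      apply Real.exp_le_exp.2
      have hb1 : (0:ℝ) < (b:ℝ) - 1 := by linarith
      rw [neg_le_neg_iff, div_le_one hb1]; linarith
    have hq : (1:ℝ) / 4 ≤ Real.exp (-1) := by
      rw [Real.exp_neg, le_inv_comm₀ (by norm_num) (Real.exp_pos 1)]
      calc Real.exp 1 ≤ 2.7182818286 := le_of_lt Real.exp_one_lt_d9
        _ ≤ (1 / 4 : ℝ)⁻¹ := by norm_num
    calc (1:ℝ) / 4 ≤ Real.exp (-1) := hq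
      _ ≤ Real.exp (-(((b:ℝ) - 2) / ((b:ℝ) - 1))) := hge
      _ = Real.exp (-(1 / ((b:ℝ) - 1))) ^ (b - 2) := hval.symm
      _ ≤ (1 - 1 / (b:ℝ)) ^ (b - 2) := hstep
      _ ≤ (1 - x) ^ (b - 2) := hmono
  have hnn : (0:ℝ) ≤ (1 - x) ^ (b - 2) := by positivity
  calc (b:ℝ) ^ 2 / 16 = ((b:ℝ) ^ 2 / 4) * (1 / 4) := by ring
    _ ≤ (b.choose 2 : ℝ) * ((1 - x) ^ (b - 2)) := by
        apply mul_le_mul hch4 hp (by norm_num) (by positivity)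
    _ = (b.choose 2 : ℝ) * (x ^ (2 - 2) * (1 - x) ^ (b - 2)) := by norm_num
    _ ≤ Gfun b x := hterm

lemma Gfun_upper_small (b : ℕ) (hb : 2 ≤ b) {x : ℝ} (h0 : 0 ≤ x) (hx : x ≤ 1 / b) :
    Gfun b x ≤ (b:ℝ) ^ 2 := by
  have hbpos : (0:ℝ) < b := by positivity
  have hbr : (2:ℝ) ≤ b := by exact_mod_cast hb
  have hx1 : x ≤ 1 := hx.trans (by rw [div_le_one hbpos]; linarith)
  rcases eq_or_lt_of_le h0 with h | h
  · rw [Gfun, ← h]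
    rw [Finset.sum_eq_single 2]
    · have hch : (b.choose 2 : ℝ) = b * ((b:ℝ) - 1) / 2 := Nat.cast_choose_two (K := ℝ) b
      simp only [Nat.sub_self, pow_zero, sub_zero, one_pow, one_mul, mul_one]
      rw [hch]; nlinarith
    · intro k hk hne
      simp only [Finset.mem_Icc] at hk
      rw [zero_pow (by omega : k - 2 ≠ 0)]
      ring
    · intro h2; simp only [Finset.mem_Icc] at h2; omega
  · have hB := B_le_quad b h0 hx1
    have hG := sq_mul_G b hb x
    have hle : x ^ 2 * Gfun b x ≤ b * ((b:ℝ) - 1) / 2 * x ^ 2 := by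
      rw [hG]; linarith [hB]
    have hx2 : (0:ℝ) < x ^ 2 := by positivity
    have := (mul_le_mul_iff_right₀ hx2).1 (by
      calc x ^ 2 * Gfun b x ≤ b * ((b:ℝ) - 1) / 2 * x ^ 2 := hle
        _ = x ^ 2 * (b * ((b:ℝ) - 1) / 2) := by ring)
    calc Gfun b x ≤ b * ((b:ℝ) - 1) / 2 := this
      _ ≤ (b:ℝ) ^ 2 := by nlinarith

lemma Gfun_eq_big (b : ℕ) (hb : 2 ≤ b) {x : ℝ} (hx : 0 < x) :
    Gfun b x = (1 - (1 - x) ^ b - b * x * (1 - x) ^ (b - 1)) / x ^ 2 := by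
  rw [← sq_mul_G b hb x]
  field_simp

lemma Gfun_lower_big (b : ℕ) (hb : 100 ≤ b) {x : ℝ} (hx : 1 / b ≤ x) (h1 : x ≤ 1) :
    1 / 4 * (1 / x ^ 2) ≤ Gfun b x := by
  have hbpos : (0:ℝ) < b := by positivity
  have hx0 : 0 < x := lt_of_lt_of_le (by positivity) hx
  rw [Gfun_eq_big b (by omega) hx0]
  have h := B_lower b hb hx h1
  rw [show (1:ℝ) / 4 * (1 / x ^ 2) = (1 / 4) / x ^ 2 by ring]
  gcongr

lemma Gfun_upper_big (b : ℕ) (hb : 100 ≤ b) {x : ℝ} (hx : 1 / b ≤ x) (h1 : x ≤ 1) :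
    Gfun b x ≤ 1 / x ^ 2 := by
  have hbpos : (0:ℝ) < b := by positivity
  have hx0 : 0 < x := lt_of_lt_of_le (by positivity) hx
  rw [Gfun_eq_big b (by omega) hx0]
  have h1x : (0:ℝ) ≤ 1 - x := by linarith
  have hv : (0:ℝ) ≤ (1 - x) ^ b := pow_nonneg h1x b
  have hsu : (0:ℝ) ≤ ↑b * x * (1 - x) ^ (b - 1) := by
    have := pow_nonneg h1x (b - 1); positivity
  gcongr
  linarith

lemma Gfun_upper_sub (b : ℕ) (hb : 100 ≤ b) {x : ℝ} (hx : 1 / b ≤ x) (h1 : x ≤ 1) :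
    Gfun b x ≤ 1 / x ^ 2 - b * ((1 - x) ^ (b - 1) / x) := by
  have hbpos : (0:ℝ) < b := by positivity
  have hx0 : 0 < x := lt_of_lt_of_le (by positivity) hx
  rw [Gfun_eq_big b (by omega) hx0]
  have h1x : (0:ℝ) ≤ 1 - x := by linarith
  have hv : (0:ℝ) ≤ (1 - x) ^ b := pow_nonneg h1x b
  have heq : 1 / x ^ 2 - ↑b * ((1 - x) ^ (b - 1) / x)
      = (1 - ↑b * x * (1 - x) ^ (b - 1)) / x ^ 2 := by
    field_simp
  rw [heq]
  gcongr
  linarith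

lemma T_le_one (b : ℕ) (hb : 100 ≤ b) :
    Real.log (2 * ((b:ℝ) - 1) / (1 - Real.exp (-1))) / b ≤ 1 := by
  have hbpos : (0:ℝ) < b := by positivity
  have hbr : (100:ℝ) ≤ b := by exact_mod_cast hb
  have hden : (1:ℝ) / 2 ≤ 1 - Real.exp (-1) := by
    have := exp_neg_one_lt
    linarith
  have hden0 : (0:ℝ) < 1 - Real.exp (-1) := by linarith
  set A := 2 * ((b:ℝ) - 1) / (1 - Real.exp (-1)) with hA
  have hA4 : A ≤ (b:ℝ) ^ 2 := by
    rw [hA, div_le_iff₀ hden0]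
    nlinarith
  have hA0 : 0 < A := by
    rw [hA]
    apply div_pos (by linarith) hden0
  have hsq : Real.sqrt b * Real.sqrt b = (b:ℝ) := Real.mul_self_sqrt (le_of_lt hbpos)
  have hsq10 : (10:ℝ) ≤ Real.sqrt b := by
    rw [show (10:ℝ) = Real.sqrt 100 by
      rw [show (100:ℝ) = 10 ^ 2 by norm_num, Real.sqrt_sq (by norm_num)]]
    exact Real.sqrt_le_sqrt hbr
  have hlogb : Real.log b = 2 * Real.log (Real.sqrt b) := by
    rw [Real.log_sqrt (le_of_lt hbpos)]; ring
  have hlogs : Real.log (Real.sqrt b) ≤ Real.sqrt b - 1 :=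
    Real.log_le_sub_one_of_pos (by linarith)
  have hlogA : Real.log A ≤ (b:ℝ) := by
    calc Real.log A ≤ Real.log ((b:ℝ) ^ 2) := Real.log_le_log hA0 hA4
      _ = 2 * Real.log b := by rw [Real.log_pow]; push_cast; ring
      _ = 4 * Real.log (Real.sqrt b) := by rw [hlogb]; ring
      _ ≤ 4 * (Real.sqrt b - 1) := by linarith
      _ ≤ Real.sqrt b * Real.sqrt b := by nlinarith
      _ = (b:ℝ) := hsq
  rw [div_le_one hbpos]
  exact hlogA

lemma lamB_eq_integral (μ : Measure ℝ) [IsFiniteMeasure μ] (b : ℕ) :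
    lamB μ b = ∫ x in Set.Icc (0:ℝ) 1, Gfun b x ∂μ := by
  have hint : ∀ k ∈ Finset.Icc 2 b,
      Integrable (fun x : ℝ => (b.choose k : ℝ) * (x ^ (k - 2) * (1 - x) ^ (b - k)))
        (μ.restrict (Set.Icc (0:ℝ) 1)) := by
    intro k _
    have hc : Continuous (fun x : ℝ => (b.choose k : ℝ) * (x ^ (k - 2) * (1 - x) ^ (b - k))) := by
      continuity
    exact hc.integrableOn_Icc
  rw [lamB]
  simp only [Gfun]
  calc ∑ k ∈ Finset.Icc 2 b, (b.choose k : ℝ) * lamBK μ b k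
      = ∑ k ∈ Finset.Icc 2 b,
          ∫ x in Set.Icc (0:ℝ) 1, (b.choose k : ℝ) * (x ^ (k - 2) * (1 - x) ^ (b - k)) ∂μ := by
        refine Finset.sum_congr rfl fun k _ => ?_
        rw [lamBK, ← integral_const_mul]
    _ = ∫ x in Set.Icc (0:ℝ) 1,
          ∑ k ∈ Finset.Icc 2 b, (b.choose k : ℝ) * (x ^ (k - 2) * (1 - x) ^ (b - k)) ∂μ :=
        (MeasureTheory.integral_finset_sum _ hint).symm

set_option maxHeartbeats 2000000 in
lemma key_bounds (μ : Measure ℝ) [IsFiniteMeasure μ] (b : ℕ) (hb : 100 ≤ b) :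
    Rquant μ b ≤ 32 * lamB μ b ∧ lamB μ b ≤ Rquant μ b := by
  have hbpos : (0:ℝ) < b := by positivity
  have hbr : (100:ℝ) ≤ b := by exact_mod_cast hb
  set t : ℝ := 1 / (b:ℝ) with htdef
  set T : ℝ := Real.log (2 * ((b:ℝ) - 1) / (1 - Real.exp (-1))) / b with hTdef
  have ht0 : 0 < t := by positivity
  have ht1 : t ≤ 1 := by rw [htdef, div_le_one hbpos]; linarith
  have hT1 : T ≤ 1 := T_le_one b hb
  -- set inclusions
  have hsub1 : Set.Ico (0:ℝ) t ⊆ Set.Icc 0 1 := fun x hx => ⟨hx.1, (le_of_lt hx.2).trans ht1⟩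
  have hsub2 : Set.Icc (0:ℝ) t ⊆ Set.Icc 0 1 := fun x hx => ⟨hx.1, hx.2.trans ht1⟩
  have hsub3 : Set.Icc t 1 ⊆ Set.Icc (0:ℝ) 1 := fun x hx => ⟨(le_of_lt ht0).trans hx.1, hx.2⟩
  have hsub4 : Set.Ico t T ⊆ Set.Icc t 1 := fun x hx => ⟨hx.1, (le_of_lt hx.2).trans hT1⟩
  have hIccIT : Set.Icc t 1 ∩ Set.Iio T = Set.Ico t T := by
    ext x
    constructor
    · rintro ⟨⟨hx1, _⟩, hx2⟩; exact ⟨hx1, hx2⟩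
    · rintro ⟨hx1, hx2⟩; exact ⟨⟨hx1, (le_of_lt hx2).trans hT1⟩, hx2⟩
  -- integrability
  have hGc : Continuous (Gfun b) := by
    unfold Gfun
    exact continuous_finset_sum _ (fun k _ => by continuity)
  have hGI : IntegrableOn (Gfun b) (Set.Icc (0:ℝ) 1) μ := hGc.integrableOn_Icc
  have hnz : ∀ x ∈ Set.Icc t 1, x ^ 2 ≠ 0 := by
    intro x hx
    have : 0 < x := lt_of_lt_of_le ht0 hx.1
    positivity
  have hIc : IntegrableOn (fun x : ℝ => 1 / x ^ 2) (Set.Icc t 1) μ := by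
    apply ContinuousOn.integrableOn_Icc
    exact ContinuousOn.div continuousOn_const ((continuous_pow 2).continuousOn) hnz
  have hfc : ContinuousOn (fun x : ℝ => (b:ℝ) * ((1 - x) ^ (b - 1) / x)) (Set.Icc t 1) := by
    apply ContinuousOn.mul continuousOn_const
    have hc1 : Continuous (fun x : ℝ => (1 - x) ^ (b - 1)) := by continuity
    apply ContinuousOn.div hc1.continuousOn continuousOn_id
    intro x hx
    exact ne_of_gt (lt_of_lt_of_le ht0 hx.1)
  have hfI : IntegrableOn (fun x : ℝ => (b:ℝ) * ((1 - x) ^ (b - 1) / x)) (Set.Icc t 1) μ :=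
    hfc.integrableOn_Icc
  have hindI : IntegrableOn
      (fun x => (Set.Iio T).indicator (fun x : ℝ => (b:ℝ) * ((1 - x) ^ (b - 1) / x)) x)
      (Set.Icc t 1) μ := hfI.indicator measurableSet_Iio
  -- a.e. nonnegativity of G on Icc 0 1
  have hGae : 0 ≤ᵐ[μ.restrict (Set.Icc (0:ℝ) 1)] Gfun b := by
    filter_upwards [ae_restrict_mem measurableSet_Icc] with x hx
    exact Gfun_nonneg b hx.1 hx.2
  -- λ as integral and split
  have hlam : lamB μ b = ∫ x in Set.Icc (0:ℝ) 1, Gfun b x ∂μ := lamB_eq_integral μ b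
  have hdisj : Disjoint (Set.Ico (0:ℝ) t) (Set.Icc t 1) := by
    rw [Set.disjoint_left]
    rintro x ⟨_, hxt⟩ ⟨hxt', _⟩
    exact absurd hxt' (not_le.2 hxt)
  have hsplit : ∫ x in Set.Icc (0:ℝ) 1, Gfun b x ∂μ
      = (∫ x in Set.Ico (0:ℝ) t, Gfun b x ∂μ) + ∫ x in Set.Icc t 1, Gfun b x ∂μ := by
    rw [← setIntegral_union hdisj measurableSet_Icc (hGI.mono_set hsub1) (hGI.mono_set hsub3),
      Set.Ico_union_Icc_eq_Icc (le_of_lt ht0) ht1]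
  -- upper bound part 1
  have hup1 : ∫ x in Set.Ico (0:ℝ) t, Gfun b x ∂μ
      ≤ (b:ℝ) ^ 2 * (μ (Set.Icc (0:ℝ) t)).toReal := by
    calc ∫ x in Set.Ico (0:ℝ) t, Gfun b x ∂μ
        ≤ ∫ _ in Set.Ico (0:ℝ) t, (b:ℝ) ^ 2 ∂μ := by
          refine setIntegral_mono_on (hGI.mono_set hsub1) ?_ measurableSet_Ico ?_
          · exact integrableOn_const (measure_ne_top μ _)
          · intro x hx
            exact Gfun_upper_small b (by omega) hx.1 (le_of_lt hx.2)
      _ = (μ (Set.Ico (0:ℝ) t)).toReal * (b:ℝ) ^ 2 := by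
          rw [setIntegral_const]; simp [smul_eq_mul, Measure.real]
      _ ≤ (b:ℝ) ^ 2 * (μ (Set.Icc (0:ℝ) t)).toReal := by
          rw [mul_comm]
          apply mul_le_mul_of_nonneg_left _ (by positivity)
          apply ENNReal.toReal_mono (measure_ne_top μ _)
          exact measure_mono Set.Ico_subset_Icc_self
  -- upper bound part 2
  have hup2 : ∫ x in Set.Icc t 1, Gfun b x ∂μ
      ≤ (∫ x in Set.Icc t 1, 1 / x ^ 2 ∂μ)
        - (b:ℝ) * ∫ x in Set.Ico t T, (1 - x) ^ (b - 1) / x ∂μ := by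
    have hpt : ∀ x ∈ Set.Icc t 1, Gfun b x
        ≤ 1 / x ^ 2 - (Set.Iio T).indicator (fun x : ℝ => (b:ℝ) * ((1 - x) ^ (b - 1) / x)) x := by
      intro x hx
      by_cases hxT : x < T
      · rw [Set.indicator_of_mem (Set.mem_Iio.2 hxT)]
        exact Gfun_upper_sub b hb hx.1 hx.2
      · rw [Set.indicator_of_notMem (by simpa using hxT)]
        simpa using Gfun_upper_big b hb hx.1 hx.2
    calc ∫ x in Set.Icc t 1, Gfun b x ∂μ
        ≤ ∫ x in Set.Icc t 1,
            (1 / x ^ 2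
              - (Set.Iio T).indicator (fun x : ℝ => (b:ℝ) * ((1 - x) ^ (b - 1) / x)) x) ∂μ := by
          exact setIntegral_mono_on (hGI.mono_set hsub3) (hIc.sub hindI) measurableSet_Icc hpt
      _ = (∫ x in Set.Icc t 1, 1 / x ^ 2 ∂μ)
            - ∫ x in Set.Icc t 1,
                (Set.Iio T).indicator (fun x : ℝ => (b:ℝ) * ((1 - x) ^ (b - 1) / x)) x ∂μ :=
          integral_sub hIc hindI
      _ = (∫ x in Set.Icc t 1, 1 / x ^ 2 ∂μ)
            - (b:ℝ) * ∫ x in Set.Ico t T, (1 - x) ^ (b - 1) / x ∂μ := by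
          rw [setIntegral_indicator measurableSet_Iio, hIccIT, integral_const_mul]
  -- lower bound ingredients
  have hl1 : (b:ℝ) ^ 2 * (μ (Set.Icc (0:ℝ) t)).toReal
      ≤ 16 * ∫ x in Set.Icc (0:ℝ) t, Gfun b x ∂μ := by
    have : ∫ _ in Set.Icc (0:ℝ) t, (b:ℝ) ^ 2 / 16 ∂μ
        ≤ ∫ x in Set.Icc (0:ℝ) t, Gfun b x ∂μ := by
      apply setIntegral_mono_on (integrableOn_const (measure_ne_top μ _))
        (hGI.mono_set hsub2) measurableSet_Icc
      intro x hx
      exact Gfun_lower_small b hb hx.1 hx.2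
    rw [setIntegral_const] at this
    simp only [smul_eq_mul, Measure.real] at this
    nlinarith [this]
  have hl2 : ∫ x in Set.Icc t 1, 1 / x ^ 2 ∂μ
      ≤ 4 * ∫ x in Set.Icc t 1, Gfun b x ∂μ := by
    rw [← integral_const_mul]
    apply setIntegral_mono_on hIc ((hGI.mono_set hsub3).const_mul 4) measurableSet_Icc
    intro x hx
    have := Gfun_lower_big b hb hx.1 hx.2
    linarith
  have hl3 : ∫ x in Set.Icc (0:ℝ) t, Gfun b x ∂μ ≤ ∫ x in Set.Icc (0:ℝ) 1, Gfun b x ∂μ :=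
    setIntegral_mono_set hGI hGae hsub2.eventuallyLE
  have hl4 : ∫ x in Set.Icc t 1, Gfun b x ∂μ ≤ ∫ x in Set.Icc (0:ℝ) 1, Gfun b x ∂μ :=
    setIntegral_mono_set hGI hGae hsub3.eventuallyLE
  have hl5 : 0 ≤ ∫ x in Set.Ico t T, (1 - x) ^ (b - 1) / x ∂μ := by
    apply setIntegral_nonneg measurableSet_Ico
    intro x hx
    have hx0 : 0 < x := lt_of_lt_of_le ht0 hx.1
    have hx1 : x ≤ 1 := (le_of_lt hx.2).trans hT1
    have : (0:ℝ) ≤ 1 - x := by linarith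
    positivity
  have hlam0 : 0 ≤ ∫ x in Set.Icc (0:ℝ) 1, Gfun b x ∂μ := integral_nonneg_of_ae hGae
  constructor
  · -- Rquant ≤ 32 λ
    rw [Rquant, hlam, ← htdef, ← hTdef, hsplit]
    have h16 : (b:ℝ) ^ 2 * (μ (Set.Icc (0:ℝ) t)).toReal
        ≤ 16 * ∫ x in Set.Icc (0:ℝ) 1, Gfun b x ∂μ := by
      calc (b:ℝ) ^ 2 * (μ (Set.Icc (0:ℝ) t)).toReal
          ≤ 16 * ∫ x in Set.Icc (0:ℝ) t, Gfun b x ∂μ := hl1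
        _ ≤ 16 * ∫ x in Set.Icc (0:ℝ) 1, Gfun b x ∂μ := by linarith
    have h4 : ∫ x in Set.Icc t 1, 1 / x ^ 2 ∂μ
        ≤ 4 * ∫ x in Set.Icc (0:ℝ) 1, Gfun b x ∂μ := by
      calc ∫ x in Set.Icc t 1, 1 / x ^ 2 ∂μ
          ≤ 4 * ∫ x in Set.Icc t 1, Gfun b x ∂μ := hl2
        _ ≤ 4 * ∫ x in Set.Icc (0:ℝ) 1, Gfun b x ∂μ := by linarith
    rw [hsplit] at hlam0 h16 h4
    have hb5 : 0 ≤ (b:ℝ) * ∫ x in Set.Ico t T, (1 - x) ^ (b - 1) / x ∂μ :=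
      mul_nonneg (le_of_lt hbpos) hl5
    linarith
  · -- λ ≤ Rquant
    rw [Rquant, hlam, ← htdef, ← hTdef, hsplit]
    linarith

theorem lamB_asymp (μ : Measure ℝ) [IsFiniteMeasure μ]
    (h0 : μ {0} = 0) (h1 : μ {1} = 0)
    (hsupp : μ ((Set.Icc (0:ℝ) 1)ᶜ) = 0) (hpos : 0 < μ (Set.Icc (0:ℝ) 1)) :
    ∃ c C : ℝ, 0 < c ∧ c ≤ C ∧ ∃ b₀ : ℕ, ∀ b : ℕ, b₀ ≤ b →
      c * Rquant μ b ≤ lamB μ b ∧ lamB μ b ≤ C * Rquant μ b := by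
  refine ⟨1/32, 1, by norm_num, by norm_num, 100, fun b hb => ?_⟩
  obtain ⟨h1, h2⟩ := key_bounds μ b hb
  constructor
  · linarith
  · linarith
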